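/- Let Q : ℝ → ℝ be a ground state and set m₀ = (1/4)∫_ℝ Q. Let P : ℝ → ℝ be three times continuously differentiable and bounded, with P', P'' bounded, tending to 0 at ±∞ and integrable, satisfying (−P'' + P − 5Q⁴P)' = (1/2)Q + yQ' on ℝ, lim_{y→−∞} P(y) = 2m₀, lim_{y→+∞} P(y) = 0, and ∫_ℝ P Q = m₀². Let A₁ : ℝ → ℝ be an odd, three times continuously differentiable bounded function with A₁', A₁'' bounded, tending to 0 at ±∞ and integrable, satisfying (−A₁'' + A₁ − 5Q⁴A₁)' = (1/2)Q + yQ' on ℝ, lim_{y→−∞} A₁(y) = m₀ and lim_{y→+∞} A₁(y) = −m₀. Then ∫_ℝ ( −(1/2)P(y) + y P'(y) + 20 (Q³ A₁ P)'(y) ) Q(y) dy = m₀². -/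

import Mathlib

open MeasureTheory Filter

private lemma integrable_one_add_abs_mul_exp :
    Integrable (fun y : ℝ => (1 + |y|) * Real.exp (-|y|)) := by
  have hcont : Continuous (fun y : ℝ => (1 + |y|) * Real.exp (-|y|)) :=
    (continuous_const.add continuous_abs).mul (Real.continuous_exp.comp continuous_abs.neg)
  have h1 : IntegrableOn (fun y : ℝ => Real.exp (-(2⁻¹ * |y|))) (Set.Ioi (0:ℝ)) := by
    have h := exp_neg_integrableOn_Ioi 0 (by norm_num : (0:ℝ) < 2⁻¹)
    apply h.congr_fun ?_ measurableSet_Ioi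
    intro x hx
    show Real.exp (-2⁻¹ * x) = Real.exp (-(2⁻¹ * |x|))
    rw [abs_of_pos hx]; ring_nf
  have h2 : IntegrableOn (fun y : ℝ => Real.exp (-(2⁻¹ * |y|))) (Set.Iic (0:ℝ)) := by
    rw [← Measure.map_neg_eq_self (volume : Measure ℝ)]
    have m : MeasurableEmbedding fun x : ℝ => -x :=
      (Homeomorph.neg ℝ).measurableEmbedding
    rw [m.integrableOn_map_iff]
    simp_rw [Function.comp_def, abs_neg, Set.neg_preimage, Set.neg_Iic, neg_zero]
    exact Iff.mpr integrableOn_Ici_iff_integrableOn_Ioi h1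
  have hint : Integrable (fun y : ℝ => Real.exp (-(2⁻¹ * |y|))) := by
    rw [← integrableOn_univ, ← Set.Iic_union_Ioi (a := (0:ℝ))]
    exact h2.union h1
  refine ((hint.const_mul 2).mono' hcont.aestronglyMeasurable ?_)
  filter_upwards with y
  have ha := Real.add_one_le_exp (2⁻¹ * |y|)
  have hb : Real.exp (2⁻¹ * |y|) * Real.exp (-(2⁻¹ * |y|)) = 1 := by
    rw [← Real.exp_add]; ring_nf; exact Real.exp_zero
  have hc : Real.exp (-|y|) = Real.exp (-(2⁻¹ * |y|)) * Real.exp (-(2⁻¹ * |y|)) := by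
    rw [← Real.exp_add]; ring_nf
  have hd := Real.exp_pos (-(2⁻¹ * |y|))
  have he := abs_nonneg y
  rw [Real.norm_eq_abs, abs_of_nonneg (by positivity)]
  nlinarith [Real.exp_pos (2⁻¹ * |y|)]

private lemma integrable_bdd_mul_decay {u v : ℝ → ℝ} (hu : Continuous u) (hv : Continuous v)
    {M C : ℝ} (hM : ∀ y, |u y| ≤ M) (hC : ∀ y, |v y| ≤ C * Real.exp (-|y|)) :
    Integrable (fun y => u y * v y) ∧ Integrable (fun y => y * (u y * v y)) := by
  have hM0 : 0 ≤ M := le_trans (abs_nonneg _) (hM 0)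
  have hC0 : 0 ≤ C := by
    have h := (abs_nonneg (v 0)).trans (hC 0)
    simpa using h
  constructor
  · refine (integrable_one_add_abs_mul_exp.const_mul (M * C)).mono'
      ((hu.mul hv).aestronglyMeasurable) ?_
    filter_upwards with y
    have h1 := hM y; have h2 := hC y
    have hexp := (Real.exp_pos (-|y|)).le
    have hay := abs_nonneg y
    rw [Real.norm_eq_abs, abs_mul]
    nlinarith [abs_nonneg (u y), abs_nonneg (v y), mul_le_mul h1 h2 (abs_nonneg _) hM0,
      mul_nonneg (mul_nonneg (mul_nonneg hM0 hC0) hay) hexp]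
  · refine (integrable_one_add_abs_mul_exp.const_mul (M * C)).mono'
      ((continuous_id.mul (hu.mul hv)).aestronglyMeasurable) ?_
    filter_upwards with y
    have h1 := hM y; have h2 := hC y
    have hexp := (Real.exp_pos (-|y|)).le
    have hay := abs_nonneg y
    rw [Real.norm_eq_abs, abs_mul, abs_mul]
    nlinarith [abs_nonneg (u y), abs_nonneg (v y), mul_le_mul h1 h2 (abs_nonneg _) hM0,
      mul_le_mul_of_nonneg_left (mul_le_mul h1 h2 (abs_nonneg _) hM0) hay,
      mul_nonneg (mul_nonneg hM0 hC0) hexp]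

/-- The explicit primitive used in the proof. -/
private noncomputable def Efun (Q P A₁ : ℝ → ℝ) : ℝ → ℝ := fun y =>
  y * P y * Q y + P y * deriv (deriv A₁) y + A₁ y * deriv (deriv P) y
    - deriv P y * deriv A₁ y - P y * A₁ y + 25 * Q y ^ 4 * (A₁ y * P y)

/-- Its derivative. -/
private noncomputable def Gfun (Q P A₁ : ℝ → ℝ) : ℝ → ℝ := fun y =>
  P y * Q y + y * (deriv P y * Q y) + y * (P y * deriv Q y)
    - ((1/2) * ((P y + A₁ y) * Q y) + y * ((P y + A₁ y) * deriv Q y))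
    + 60 * ((Q y ^ 3 * (A₁ y * P y)) * deriv Q y)
    + 20 * ((Q y ^ 3 * (deriv A₁ y * P y + A₁ y * deriv P y)) * Q y)

/-- A ground state: a smooth, even, positive solution of `Q'' + Q⁵ = Q` on `ℝ`,
all of whose derivatives decay exponentially. -/
def IsGroundState (Q : ℝ → ℝ) : Prop :=
  ContDiff ℝ (⊤ : ℕ∞) Q ∧ (∀ y : ℝ, 0 < Q y) ∧ (∀ y : ℝ, Q (-y) = Q y) ∧
  (∀ y : ℝ, deriv (deriv Q) y + Q y ^ 5 = Q y) ∧
  ∀ k : ℕ, ∃ C > (0:ℝ), ∀ y : ℝ, |iteratedDeriv k Q y| ≤ C * Real.exp (-|y|)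

/-- The identity `( −P/2 + yP' + 20(Q³A₁P)', Q ) = m₀²` (Lemma on `P` and `A₁`). -/
theorem stmt_5 (Q : ℝ → ℝ) (hQ : IsGroundState Q)
    (m₀ : ℝ) (hm₀ : m₀ = (1/4) * ∫ y : ℝ, Q y)
    (P : ℝ → ℝ) (hP : ContDiff ℝ 3 P)
    (hPbd : ∃ M : ℝ, ∀ y : ℝ, |P y| ≤ M)
    (hP'bd : ∃ M : ℝ, ∀ y : ℝ, |deriv P y| ≤ M)
    (hP''bd : ∃ M : ℝ, ∀ y : ℝ, |deriv (deriv P) y| ≤ M)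
    (hP'top : Tendsto (deriv P) atTop (nhds 0))
    (hP'bot : Tendsto (deriv P) atBot (nhds 0))
    (hP''top : Tendsto (deriv (deriv P)) atTop (nhds 0))
    (hP''bot : Tendsto (deriv (deriv P)) atBot (nhds 0))
    (hP'int : Integrable (deriv P))
    (hP''int : Integrable (deriv (deriv P)))
    (hLP : ∀ y : ℝ,
      deriv (fun z : ℝ => -(deriv (deriv P) z) + P z - 5 * Q z ^ 4 * P z) y
        = (1/2) * Q y + y * deriv Q y)
    (hPbot : Tendsto P atBot (nhds (2 * m₀)))
    (hPtop : Tendsto P atTop (nhds 0))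
    (hPQ : ∫ y : ℝ, P y * Q y = m₀ ^ 2)
    (A₁ : ℝ → ℝ) (hA₁odd : ∀ y : ℝ, A₁ (-y) = -A₁ y) (hA₁ : ContDiff ℝ 3 A₁)
    (hA₁bd : ∃ M : ℝ, ∀ y : ℝ, |A₁ y| ≤ M)
    (hA₁'bd : ∃ M : ℝ, ∀ y : ℝ, |deriv A₁ y| ≤ M)
    (hA₁''bd : ∃ M : ℝ, ∀ y : ℝ, |deriv (deriv A₁) y| ≤ M)
    (hA₁'top : Tendsto (deriv A₁) atTop (nhds 0))
    (hA₁'bot : Tendsto (deriv A₁) atBot (nhds 0))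
    (hA₁''top : Tendsto (deriv (deriv A₁)) atTop (nhds 0))
    (hA₁''bot : Tendsto (deriv (deriv A₁)) atBot (nhds 0))
    (hA₁'int : Integrable (deriv A₁))
    (hA₁''int : Integrable (deriv (deriv A₁)))
    (hLA₁ : ∀ y : ℝ,
      deriv (fun z : ℝ => -(deriv (deriv A₁) z) + A₁ z - 5 * Q z ^ 4 * A₁ z) y
        = (1/2) * Q y + y * deriv Q y)
    (hA₁bot : Tendsto A₁ atBot (nhds m₀))
    (hA₁top : Tendsto A₁ atTop (nhds (-m₀))) :
    ∫ y : ℝ,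
      (-(1/2) * P y + y * deriv P y
        + 20 * deriv (fun z : ℝ => Q z ^ 3 * A₁ z * P z) y) * Q y = m₀ ^ 2 := by
  obtain ⟨hQs, hQpos, hQeven, _hQeq, hQdecay⟩ := hQ
  obtain ⟨C0, hC0pos, hC0⟩ := hQdecay 0
  obtain ⟨C1, hC1pos, hC1⟩ := hQdecay 1
  simp only [iteratedDeriv_zero] at hC0
  simp only [iteratedDeriv_one] at hC1
  obtain ⟨MP, hMP⟩ := hPbd
  obtain ⟨MP', hMP'⟩ := hP'bd
  obtain ⟨MA, hMA⟩ := hA₁bd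
  obtain ⟨MA', hMA'⟩ := hA₁'bd
  -- differentiability and continuity
  have h3 : (3 : WithTop ℕ∞) = 2 + 1 := by norm_num
  have h2 : (2 : WithTop ℕ∞) = 1 + 1 := by norm_num
  obtain ⟨hPd, -, hP2⟩ := contDiff_succ_iff_deriv.mp (h3 ▸ hP)
  obtain ⟨hP'd, -, hP1⟩ := contDiff_succ_iff_deriv.mp (h2 ▸ hP2)
  obtain ⟨hP''d, -⟩ := contDiff_one_iff_deriv.mp hP1
  obtain ⟨hAd, -, hA2⟩ := contDiff_succ_iff_deriv.mp (h3 ▸ hA₁)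
  obtain ⟨hA'd, -, hA1⟩ := contDiff_succ_iff_deriv.mp (h2 ▸ hA2)
  obtain ⟨hA''d, -⟩ := contDiff_one_iff_deriv.mp hA1
  have hQ2 : ContDiff ℝ 2 Q := hQs.of_le (by exact WithTop.coe_le_coe.mpr le_top)
  obtain ⟨hQd, -, hQ1⟩ := contDiff_succ_iff_deriv.mp (h2 ▸ hQ2)
  have hQ'c : Continuous (deriv Q) := hQ1.continuous
  have hQc : Continuous Q := hQd.continuous
  have hPc : Continuous P := hPd.continuous
  have hP'c : Continuous (deriv P) := hP'd.continuous
  have hAc : Continuous A₁ := hAd.continuous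
  have hA'c : Continuous (deriv A₁) := hA'd.continuous
  -- bounds
  have hQbd : ∀ y, |Q y| ≤ C0 := by
    intro y
    refine (hC0 y).trans ?_
    nlinarith [Real.exp_le_one_iff.mpr (neg_nonpos.mpr (abs_nonneg y)), Real.exp_pos (-|y|)]
  -- third derivatives via the linearized-operator hypotheses
  have hfP : ∀ y, HasDerivAt (fun z => -(deriv (deriv P) z) + P z - 5 * Q z ^ 4 * P z)
      ((1/2) * Q y + y * deriv Q y) y := by
    intro y
    have hdiff : DifferentiableAt ℝ
        (fun z => -(deriv (deriv P) z) + P z - 5 * Q z ^ 4 * P z) y :=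
      (((hP''d y).neg.add (hPd y)).sub ((((hQd y).pow 4).const_mul (5:ℝ)).mul (hPd y)))
    have h := hdiff.hasDerivAt
    rwa [hLP y] at h
  have hfA : ∀ y, HasDerivAt (fun z => -(deriv (deriv A₁) z) + A₁ z - 5 * Q z ^ 4 * A₁ z)
      ((1/2) * Q y + y * deriv Q y) y := by
    intro y
    have hdiff : DifferentiableAt ℝ
        (fun z => -(deriv (deriv A₁) z) + A₁ z - 5 * Q z ^ 4 * A₁ z) y :=
      (((hA''d y).neg.add (hAd y)).sub ((((hQd y).pow 4).const_mul (5:ℝ)).mul (hAd y)))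
    have h := hdiff.hasDerivAt
    rwa [hLA₁ y] at h
  have hP''' : ∀ y, HasDerivAt (deriv (deriv P))
      (deriv P y - (20 * Q y ^ 3 * deriv Q y * P y + 5 * Q y ^ 4 * deriv P y)
        - ((1/2) * Q y + y * deriv Q y)) y := by
    intro y
    have h1 : HasDerivAt (fun z => P z - 5 * Q z ^ 4 * P z)
        (deriv P y - (20 * Q y ^ 3 * deriv Q y * P y + 5 * Q y ^ 4 * deriv P y)) y := by
      have h := (hPd y).hasDerivAt.sub
        ((((hQd y).hasDerivAt.pow 4).const_mul (5:ℝ)).mul (hPd y).hasDerivAt)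
      refine h.congr_deriv ?_
      simp only [Pi.pow_apply]; push_cast; ring
    have h2 := h1.sub (hfP y)
    have h3 := h2.congr_of_eventuallyEq (Filter.Eventually.of_forall
      (fun z => show deriv (deriv P) z
        = P z - 5 * Q z ^ 4 * P z - (-(deriv (deriv P) z) + P z - 5 * Q z ^ 4 * P z) by ring))
    convert h3 using 1
  have hA''' : ∀ y, HasDerivAt (deriv (deriv A₁))
      (deriv A₁ y - (20 * Q y ^ 3 * deriv Q y * A₁ y + 5 * Q y ^ 4 * deriv A₁ y)
        - ((1/2) * Q y + y * deriv Q y)) y := by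
    intro y
    have h1 : HasDerivAt (fun z => A₁ z - 5 * Q z ^ 4 * A₁ z)
        (deriv A₁ y - (20 * Q y ^ 3 * deriv Q y * A₁ y + 5 * Q y ^ 4 * deriv A₁ y)) y := by
      have h := (hAd y).hasDerivAt.sub
        ((((hQd y).hasDerivAt.pow 4).const_mul (5:ℝ)).mul (hAd y).hasDerivAt)
      refine h.congr_deriv ?_
      simp only [Pi.pow_apply]; push_cast; ring
    have h2 := h1.sub (hfA y)
    have h3 := h2.congr_of_eventuallyEq (Filter.Eventually.of_forall
      (fun z => show deriv (deriv A₁) z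
        = A₁ z - 5 * Q z ^ 4 * A₁ z - (-(deriv (deriv A₁) z) + A₁ z - 5 * Q z ^ 4 * A₁ z) by ring))
    convert h3 using 1
  -- E has derivative G
  have hE : ∀ y, HasDerivAt (Efun Q P A₁) (Gfun Q P A₁ y) y := by
    intro y
    have t1 := ((hasDerivAt_id y).mul (hPd y).hasDerivAt).mul (hQd y).hasDerivAt
    have t2 := (hPd y).hasDerivAt.mul (hA''' y)
    have t3 := (hAd y).hasDerivAt.mul (hP''' y)
    have t4 := (hP'd y).hasDerivAt.mul (hA'd y).hasDerivAt
    have t5 := (hPd y).hasDerivAt.mul (hAd y).hasDerivAt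
    have t6 := (((hQd y).hasDerivAt.pow 4).const_mul (25:ℝ)).mul
      ((hAd y).hasDerivAt.mul (hPd y).hasDerivAt)
    have h := ((((t1.add t2).add t3).sub t4).sub t5).add t6
    have hfun : Efun Q P A₁ = fun z =>
        z * P z * Q z + P z * deriv (deriv A₁) z + A₁ z * deriv (deriv P) z
          - deriv P z * deriv A₁ z - P z * A₁ z + 25 * Q z ^ 4 * (A₁ z * P z) := rfl
    rw [hfun]
    refine h.congr_deriv ?_
    simp only [Gfun, id_eq, Pi.mul_apply, Pi.pow_apply]
    push_cast; ring
  -- limits of E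
  have hexp_top : Tendsto (fun y : ℝ => Real.exp (-|y|)) atTop (nhds 0) :=
    Real.tendsto_exp_atBot.comp (tendsto_neg_atTop_atBot.comp tendsto_abs_atTop_atTop)
  have hexp_bot : Tendsto (fun y : ℝ => Real.exp (-|y|)) atBot (nhds 0) :=
    Real.tendsto_exp_atBot.comp (tendsto_neg_atTop_atBot.comp tendsto_abs_atBot_atTop)
  have habs1 : Tendsto (fun t : ℝ => t * Real.exp (-t)) atTop (nhds 0) := by
    simpa using Real.tendsto_pow_mul_exp_neg_atTop_nhds_zero 1
  have hQtop : Tendsto Q atTop (nhds 0) := by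
    refine squeeze_zero_norm (fun y => ?_) (by simpa using hexp_top.const_mul C0)
    rw [Real.norm_eq_abs]; exact hC0 y
  have hQbot : Tendsto Q atBot (nhds 0) := by
    refine squeeze_zero_norm (fun y => ?_) (by simpa using hexp_bot.const_mul C0)
    rw [Real.norm_eq_abs]; exact hC0 y
  have hyQbound : ∀ y : ℝ, ‖y * Q y‖ ≤ C0 * (|y| * Real.exp (-|y|)) := by
    intro y
    rw [Real.norm_eq_abs, abs_mul]
    have h := mul_le_mul_of_nonneg_left (hC0 y) (abs_nonneg y)
    exact h.trans_eq (by ring)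
  have hyQtop : Tendsto (fun y : ℝ => y * Q y) atTop (nhds 0) := by
    refine squeeze_zero_norm hyQbound ?_
    have h := habs1.comp tendsto_abs_atTop_atTop
    simpa using (h.const_mul C0)
  have hyQbot : Tendsto (fun y : ℝ => y * Q y) atBot (nhds 0) := by
    refine squeeze_zero_norm hyQbound ?_
    have h := habs1.comp tendsto_abs_atBot_atTop
    simpa using (h.const_mul C0)
  have hEtop : Tendsto (Efun Q P A₁) atTop (nhds 0) := by
    have h := (((((hyQtop.mul hPtop).add (hPtop.mul hA₁''top)).add
        (hA₁top.mul hP''top)).sub (hP'top.mul hA₁'top)).sub (hPtop.mul hA₁top)).add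
        (((hQtop.pow 4).const_mul (25:ℝ)).mul (hA₁top.mul hPtop))
    norm_num at h
    exact h.congr (fun y => by simp only [Efun]; ring)
  have hEbot : Tendsto (Efun Q P A₁) atBot (nhds (-(2 * m₀ ^ 2))) := by
    have h := (((((hyQbot.mul hPbot).add (hPbot.mul hA₁''bot)).add
        (hA₁bot.mul hP''bot)).sub (hP'bot.mul hA₁'bot)).sub (hPbot.mul hA₁bot)).add
        (((hQbot.pow 4).const_mul (25:ℝ)).mul (hA₁bot.mul hPbot))
    rw [show (0 * (2 * m₀) + 2 * m₀ * 0 + m₀ * 0 - 0 * 0 - 2 * m₀ * m₀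
        + 25 * 0 ^ 4 * (m₀ * (2 * m₀))) = -(2 * m₀ ^ 2) by ring] at h
    exact h.congr (fun y => by simp only [Efun]; ring)
  -- integrability of G and friends
  have hPA : ∀ y, |P y + A₁ y| ≤ MP + MA :=
    fun y => (abs_add_le _ _).trans (add_le_add (hMP y) (hMA y))
  have hMPnn : 0 ≤ MP := le_trans (abs_nonneg _) (hMP 0)
  have hMAnn : 0 ≤ MA := le_trans (abs_nonneg _) (hMA 0)
  have hMP'nn : 0 ≤ MP' := le_trans (abs_nonneg _) (hMP' 0)
  have hMA'nn : 0 ≤ MA' := le_trans (abs_nonneg _) (hMA' 0)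
  have hQ3AP : ∀ y, |Q y ^ 3 * (A₁ y * P y)| ≤ C0 ^ 3 * (MA * MP) := by
    intro y
    rw [abs_mul, abs_pow, abs_mul]
    exact mul_le_mul (pow_le_pow_left₀ (abs_nonneg _) (hQbd y) 3)
      (mul_le_mul (hMA y) (hMP y) (abs_nonneg _) hMAnn) (by positivity) (by positivity)
  have hQ3sum : ∀ y, |Q y ^ 3 * (deriv A₁ y * P y + A₁ y * deriv P y)|
      ≤ C0 ^ 3 * (MA' * MP + MA * MP') := by
    intro y
    rw [abs_mul, abs_pow]
    refine mul_le_mul (pow_le_pow_left₀ (abs_nonneg _) (hQbd y) 3) ?_ (abs_nonneg _)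
      (by positivity)
    refine (abs_add_le _ _).trans ?_
    rw [abs_mul, abs_mul]
    exact add_le_add (mul_le_mul (hMA' y) (hMP y) (abs_nonneg _) hMA'nn)
      (mul_le_mul (hMA y) (hMP' y) (abs_nonneg _) hMAnn)
  have i1 : Integrable (fun y => P y * Q y) :=
    (integrable_bdd_mul_decay hPc hQc hMP hC0).1
  have i2 : Integrable (fun y => y * (deriv P y * Q y)) :=
    (integrable_bdd_mul_decay hP'c hQc hMP' hC0).2
  have i3 : Integrable (fun y => y * (P y * deriv Q y)) :=
    (integrable_bdd_mul_decay hPc hQ'c hMP hC1).2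
  have i4a : Integrable (fun y => (P y + A₁ y) * Q y) :=
    (integrable_bdd_mul_decay (hPc.add hAc) hQc hPA hC0).1
  have i4b : Integrable (fun y => y * ((P y + A₁ y) * deriv Q y)) :=
    (integrable_bdd_mul_decay (hPc.add hAc) hQ'c hPA hC1).2
  have i5 : Integrable (fun y => (Q y ^ 3 * (A₁ y * P y)) * deriv Q y) :=
    (integrable_bdd_mul_decay ((hQc.pow 3).mul (hAc.mul hPc)) hQ'c hQ3AP hC1).1
  have i6 : Integrable (fun y => (Q y ^ 3 * (deriv A₁ y * P y + A₁ y * deriv P y)) * Q y) :=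
    (integrable_bdd_mul_decay ((hQc.pow 3).mul ((hA'c.mul hPc).add (hAc.mul hP'c))) hQc
      hQ3sum hC0).1
  have iA : Integrable (fun y => A₁ y * ((1/2) * Q y + y * deriv Q y)) := by
    have h := (((integrable_bdd_mul_decay hAc hQc hMA hC0).1.const_mul (1/2)).add
      ((integrable_bdd_mul_decay hAc hQ'c hMA hC1).2))
    exact h.congr (Filter.Eventually.of_forall (fun y => by
      simp only [Pi.add_apply]; ring))
  have hGint : Integrable (Gfun Q P A₁) := by
    have h := ((((i1.add i2).add i3).sub ((i4a.const_mul (1/2)).add i4b)).add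
      (i5.const_mul 60)).add (i6.const_mul 20)
    exact h.congr (Filter.Eventually.of_forall (fun y => by
      simp only [Gfun, Pi.add_apply, Pi.sub_apply]))
  -- the FTC step
  have hintG : ∫ y : ℝ, Gfun Q P A₁ y = 2 * m₀ ^ 2 := by
    have h := integral_of_hasDerivAt_of_tendsto hE hGint hEbot hEtop
    rw [h]; ring
  -- oddness step
  have hQ'odd : ∀ y : ℝ, deriv Q (-y) = - deriv Q y := by
    intro y
    have h1 : (fun x : ℝ => Q (-x)) = Q := funext fun x => hQeven x
    have h2 := deriv_comp_neg (f := Q) (x := y)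
    rw [h1] at h2
    linarith
  have hodd : ∫ y : ℝ, A₁ y * ((1/2) * Q y + y * deriv Q y) = 0 := by
    have h := integral_neg_eq_self (fun y : ℝ => A₁ y * ((1/2) * Q y + y * deriv Q y)) volume
    have h2 : ∀ x : ℝ, A₁ (-x) * ((1/2) * Q (-x) + (-x) * deriv Q (-x))
        = -(A₁ x * ((1/2) * Q x + x * deriv Q x)) := by
      intro x
      rw [hA₁odd, hQeven, hQ'odd]; ring
    simp only [h2] at h
    rw [integral_neg] at h
    linarith
  -- pointwise identity
  have hkey : ∀ y : ℝ, (-(1/2) * P y + y * deriv P y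
      + 20 * deriv (fun z : ℝ => Q z ^ 3 * A₁ z * P z) y) * Q y
      = Gfun Q P A₁ y - P y * Q y + A₁ y * ((1/2) * Q y + y * deriv Q y) := by
    intro y
    have h := (((hQd y).hasDerivAt.pow 3).mul (hAd y).hasDerivAt).mul (hPd y).hasDerivAt
    have hd : deriv (fun z : ℝ => Q z ^ 3 * A₁ z * P z) y
        = ((↑(3:ℕ) * Q y ^ 2 * deriv Q y) * A₁ y + Q y ^ 3 * deriv A₁ y) * P y
          + Q y ^ 3 * A₁ y * deriv P y := h.deriv
    rw [hd]
    simp only [Gfun]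
    push_cast; ring
  -- conclusion
  simp only [hkey]
  have hsub : Integrable (fun y => Gfun Q P A₁ y - P y * Q y) := hGint.sub i1
  have e1 : ∫ y : ℝ, (Gfun Q P A₁ y - P y * Q y + A₁ y * ((1/2) * Q y + y * deriv Q y))
      = (∫ y : ℝ, (Gfun Q P A₁ y - P y * Q y))
        + ∫ y : ℝ, A₁ y * ((1/2) * Q y + y * deriv Q y) := integral_add hsub iA
  have e2 : ∫ y : ℝ, (Gfun Q P A₁ y - P y * Q y)
      = (∫ y : ℝ, Gfun Q P A₁ y) - ∫ y : ℝ, P y * Q y := integral_sub hGint i1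
  rw [e1, e2, hintG, hPQ, hodd]
  ring
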